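/- Let p^1, …, p^m be measurable random variables taking values in Δ^n whose coordinates are almost surely strictly positive, and let J be a measurable random variable taking values in [n], on a common probability space; assume every expert is calibrated. Fix a weight vector w ∈ Δ^m, indices i ∈ [m] and j ∈ [n], and q > 0, and let p*(w) be the logarithmic pool of the random forecasts p^1, …, p^m with weights w. Then P(p*_j(w) ≥ (p^i_j)^{w_i} / q) ≤ m n q. -/

import Mathlib

open Finset MeasureTheory

/-- The logarithmic pool of forecasts `p 1, …, p m` over `n` outcomes,
with weight vector `w`, evaluated at outcome `l`. -/
noncomputable def logPool {m n : ℕ} (p : Fin m → Fin n → ℝ) (w : Fin m → ℝ) (l : Fin n) : ℝ :=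
  (∏ k, (p k l) ^ (w k)) / (∑ l', ∏ k, (p k l') ^ (w k))

lemma key_lemma {m n : ℕ} (p : Fin m → Fin n → ℝ) (w : Fin m → ℝ)
    (hw : w ∈ stdSimplex ℝ (Fin m))
    (hpos : ∀ k l, 0 < p k l) (hle1 : ∀ k l, p k l ≤ 1)
    (i : Fin m) (j j' : Fin n) (q : ℝ) (hq : 0 < q)
    (h : (p i j) ^ (w i) / q ≤ logPool p w j) : ∃ k, p k j' ≤ q := by
  set Z : ℝ := ∑ l', ∏ k, (p k l') ^ (w k) with hZ
  have hterm : ∀ l', 0 < ∏ k, (p k l') ^ (w k) := fun l' =>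
    Finset.prod_pos fun k _ => Real.rpow_pos_of_pos (hpos k l') _
  have hZpos : 0 < Z :=
    Finset.sum_pos (fun l' _ => hterm l') ⟨j, mem_univ j⟩
  have ha : 0 < (p i j) ^ (w i) := Real.rpow_pos_of_pos (hpos i j) _
  have hprod : ∏ k, (p k j) ^ (w k) ≤ (p i j) ^ (w i) := by
    rw [← Finset.mul_prod_erase univ _ (mem_univ i)]
    have : ∏ k ∈ univ.erase i, (p k j) ^ (w k) ≤ 1 :=
      Finset.prod_le_one (fun k _ => Real.rpow_nonneg (hpos k j).le _)
        (fun k _ => Real.rpow_le_one (hpos k j).le (hle1 k j) (hw.1 k))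
    nlinarith
  have hZq : Z ≤ q := by
    have h2 : (p i j) ^ (w i) / q ≤ (p i j) ^ (w i) / Z := by
      refine h.trans ?_
      unfold logPool
      gcongr
    have h3 := (div_le_div_iff₀ hq hZpos).mp h2
    exact le_of_mul_le_mul_left (by linarith) ha
  obtain ⟨k0, -, hk0⟩ := Finset.exists_min_image univ (fun k => p k j') ⟨i, mem_univ i⟩
  refine ⟨k0, ?_⟩
  have hc : p k0 j' ≤ ∏ k, (p k j') ^ (w k) := by
    calc p k0 j' = (p k0 j') ^ (∑ k, w k) := by rw [hw.2, Real.rpow_one]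
      _ = ∏ k, (p k0 j') ^ (w k) := Real.rpow_sum_of_pos (hpos k0 j') _ _
      _ ≤ ∏ k, (p k j') ^ (w k) :=
          Finset.prod_le_prod (fun k _ => Real.rpow_nonneg (hpos k0 j').le _)
            (fun k _ => Real.rpow_le_rpow (hpos k0 j').le (hk0 k (mem_univ k)) (hw.1 k))
  have : ∏ k, (p k j') ^ (w k) ≤ Z := Finset.single_le_sum (fun l' _ => (hterm l').le) (mem_univ j')
  linarith

lemma cal_bound {m n : ℕ}
    {Ω : Type*} [MeasurableSpace Ω] (μ : Measure Ω) [IsProbabilityMeasure μ]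
    (p : Fin m → Ω → Fin n → ℝ) (hpm : ∀ i, Measurable (p i))
    (J : Ω → Fin n) (hJ : Measurable J)
    (hsimplex : ∀ i ω, p i ω ∈ stdSimplex ℝ (Fin n))
    (hcal : ∀ (i : Fin m) (j : Fin n),
      (μ[(fun ω => if J ω = j then (1:ℝ) else 0) |
          MeasurableSpace.comap (p i) inferInstance]) =ᵐ[μ] fun ω => p i ω j)
    (k : Fin m) (j' : Fin n) (q : ℝ) (hq : 0 < q) :
    μ {ω | J ω = j' ∧ p k ω j' ≤ q} ≤ ENNReal.ofReal q := by
  have hle : MeasurableSpace.comap (p k) inferInstance ≤ ‹MeasurableSpace Ω› :=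
    (hpm k).comap_le
  haveI : SigmaFinite (μ.trim hle) := by infer_instance
  set B : Set Ω := p k ⁻¹' {f : Fin n → ℝ | f j' ≤ q} with hBdef
  have hBm0 : MeasurableSet[MeasurableSpace.comap (p k) inferInstance] B :=
    ⟨{f : Fin n → ℝ | f j' ≤ q}, measurableSet_le (measurable_pi_apply j') measurable_const, rfl⟩
  have hB : MeasurableSet B := hle _ hBm0
  have hA : MeasurableSet (J ⁻¹' {j'}) := hJ (measurableSet_singleton j')
  set f : Ω → ℝ := fun ω => if J ω = j' then (1:ℝ) else 0 with hfdef
  have hfeq : f = (J ⁻¹' {j'}).indicator 1 := by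
    funext ω; by_cases h : J ω = j' <;> simp [hfdef, h, Set.indicator_apply]
  have hfint : Integrable f μ := by
    rw [hfeq]; exact (integrable_const (1:ℝ)).indicator hA
  have hpint : Integrable (fun ω => p k ω j') μ := by
    refine (integrable_const (1:ℝ)).mono' ((measurable_pi_apply j').comp (hpm k)).aestronglyMeasurable ?_
    filter_upwards with ω
    have h0 := (hsimplex k ω).1 j'
    have h1 : p k ω j' ≤ 1 := by
      have := Finset.single_le_sum (f := fun l => p k ω l) (fun l _ => (hsimplex k ω).1 l) (mem_univ j')
      rw [(hsimplex k ω).2] at this; exact this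
    rw [Real.norm_eq_abs, abs_of_nonneg h0]; exact h1
  have hset : {ω | J ω = j' ∧ p k ω j' ≤ q} = J ⁻¹' {j'} ∩ B := by
    ext ω; simp [hBdef, Set.mem_preimage]
  have step1 : (μ (J ⁻¹' {j'} ∩ B)).toReal = ∫ ω in B, f ω ∂μ := by
    rw [hfeq, integral_indicator_one hA, Measure.real, Measure.restrict_apply hA]
  have step2 : ∫ ω in B, f ω ∂μ = ∫ ω in B, p k ω j' ∂μ := by
    rw [← setIntegral_condExp hle hfint hBm0]
    exact setIntegral_congr_ae hB ((hcal k j').mono fun ω h _ => h)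
  have step3 : ∫ ω in B, p k ω j' ∂μ ≤ q := by
    have : ∫ ω in B, p k ω j' ∂μ ≤ ∫ _ω in B, q ∂μ := by
      refine setIntegral_mono_on hpint.integrableOn (integrable_const q).integrableOn hB ?_
      intro ω hω; exact hω
    rw [setIntegral_const, smul_eq_mul] at this
    have hμB : (μ B).toReal ≤ 1 := by
      have := measure_mono (μ := μ) (Set.subset_univ B)
      rw [measure_univ] at this
      exact ENNReal.toReal_le_of_le_ofReal one_pos.le (by simpa using this)
    rw [Measure.real] at this; nlinarith
  rw [hset]
  rw [← ENNReal.ofReal_toReal (measure_ne_top μ _)]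
  exact ENNReal.ofReal_le_ofReal (by rw [step1, step2] at *; linarith)

/-- Corollary: if every expert is calibrated, then for any weight vector `w`,
expert `i`, outcome `j` and `q > 0`, the probability that the logarithmic pool
satisfies `p*_j(w) ≥ (p^i_j)^{w_i} / q` is at most `m n q`. -/
theorem stmt11 {m n : ℕ} (hm : 0 < m) (hn : 0 < n)
    {Ω : Type*} [MeasurableSpace Ω] (μ : Measure Ω) [IsProbabilityMeasure μ]
    (p : Fin m → Ω → Fin n → ℝ) (hpm : ∀ i, Measurable (p i))
    (J : Ω → Fin n) (hJ : Measurable J)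
    (hsimplex : ∀ i ω, p i ω ∈ stdSimplex ℝ (Fin n))
    (hppos : ∀ i, ∀ᵐ ω ∂μ, ∀ l, 0 < p i ω l)
    (hcal : ∀ (i : Fin m) (j : Fin n),
      (μ[(fun ω => if J ω = j then (1:ℝ) else 0) |
          MeasurableSpace.comap (p i) inferInstance]) =ᵐ[μ] fun ω => p i ω j)
    (w : Fin m → ℝ) (hw : w ∈ stdSimplex ℝ (Fin m))
    (i : Fin m) (j : Fin n) (q : ℝ) (hq : 0 < q) :
    (μ {ω | (p i ω j) ^ (w i) / q ≤ logPool (fun k => p k ω) w j}).toReal ≤ m * n * q := by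
  set S := {ω | (p i ω j) ^ (w i) / q ≤ logPool (fun k => p k ω) w j} with hS
  set G := {ω | ∀ k l, 0 < p k ω l} with hGdef
  have hG : μ Gᶜ = 0 := by
    have hall : ∀ᵐ ω ∂μ, ∀ k l, 0 < p k ω l := ae_all_iff.2 hppos
    rw [ae_iff] at hall
    exact hall
  set A : Fin m × Fin n → Set Ω := fun kj => {ω | J ω = kj.2 ∧ p kj.1 ω kj.2 ≤ q} with hA
  have hsub : S ∩ G ⊆ ⋃ kj, A kj := by
    rintro ω ⟨hωS, hωG⟩
    have hle1 : ∀ k l, p k ω l ≤ 1 := by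
      intro k l
      have := Finset.single_le_sum (f := fun l => p k ω l) (fun l _ => (hsimplex k ω).1 l) (mem_univ l)
      rw [(hsimplex k ω).2] at this; exact this
    obtain ⟨k, hk⟩ := key_lemma (fun k => p k ω) w hw (fun k l => hωG k l) hle1 i j (J ω) q hq hωS
    exact Set.mem_iUnion.mpr ⟨(k, J ω), rfl, hk⟩
  have hbound : μ S ≤ (m * n : ℕ) * ENNReal.ofReal q := by
    calc μ S ≤ μ ((S ∩ G) ∪ Gᶜ) := measure_mono (fun ω hω => by
          by_cases h : ω ∈ G
          · exact Or.inl ⟨hω, h⟩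
          · exact Or.inr h)
      _ ≤ μ (S ∩ G) + μ Gᶜ := measure_union_le _ _
      _ = μ (S ∩ G) := by rw [hG, add_zero]
      _ ≤ μ (⋃ kj, A kj) := measure_mono hsub
      _ ≤ ∑' kj, μ (A kj) := measure_iUnion_le _
      _ = ∑ kj, μ (A kj) := tsum_fintype _
      _ ≤ ∑ _kj : Fin m × Fin n, ENNReal.ofReal q := by
          refine Finset.sum_le_sum fun kj _ => ?_
          exact cal_bound μ p hpm J hJ hsimplex hcal kj.1 kj.2 q hq
      _ = (m * n : ℕ) * ENNReal.ofReal q := by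
          rw [Finset.sum_const, nsmul_eq_mul]
          simp
  have hfin : ((m * n : ℕ) : ENNReal) * ENNReal.ofReal q ≠ ⊤ :=
    ENNReal.mul_ne_top (ENNReal.natCast_ne_top _) ENNReal.ofReal_ne_top
  have hmono := ENNReal.toReal_mono hfin hbound
  refine hmono.trans (le_of_eq ?_)
  rw [ENNReal.toReal_mul, ENNReal.toReal_ofReal hq.le]
  rw [ENNReal.toReal_natCast]
  push_cast
  ring
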